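/- Given positive integers w₁,…,w_m, k, and B, there exists a partition I₁,…,I_k of {1,…,m} with max_{1≤i≤k} Σ_{j∈I_i} w_j ≤ B if and only if the temporal graph consisting of m vertices v₁,…,v_m, where v_j has exactly w_j self-loop temporal edges all with distinct availability times, admits a Substream index with k substreams of size at most B (i.e., there are subsets S₁,…,S_k of the edge set, each of cardinality at most B, and an assignment f of vertices to indices such that for every vertex v_j, the set ξ(v_j) of all edges usable by a temporal walk starting at v_j is contained in S_{f(v_j)}). -/

import Mathlib

/-- A temporal edge with tail, head, availability time and transition time. -/
structure TEdge (V : Type) where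
  tail : V
  head : V
  time : ℕ
  trans : ℕ
deriving DecidableEq

/-- `W` is a temporal walk starting at `v` using only edges from `E`. -/
def WalkFrom {V : Type} (E : Set (TEdge V)) (v : V) (W : List (TEdge V)) : Prop :=
  W ≠ [] ∧ (∀ e ∈ W, e ∈ E) ∧ (∀ e, W.head? = some e → e.tail = v) ∧
  W.Chain' (fun e f => e.head = f.tail ∧ e.time + e.trans ≤ f.time)

/-- `ξ(v)`: the set of edges usable by some temporal walk starting at `v`. -/
def xi {V : Type} (E : Set (TEdge V)) (v : V) : Set (TEdge V) :=
  {e | ∃ W, WalkFrom E v W ∧ e ∈ W}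

/-- The walk `W` ends at vertex `w`. -/
def EndsAt {V : Type} (W : List (TEdge V)) (w : V) : Prop :=
  W.getLast?.map TEdge.head = some w

/-- `W` is a temporal path from `v`: a walk visiting each vertex at most once. -/
def PathFrom {V : Type} (E : Set (TEdge V)) (v : V) (W : List (TEdge V)) : Prop :=
  WalkFrom E v W ∧ (v :: W.map TEdge.head).Nodup

/-- The duration of a temporal walk: arrival time minus starting time. -/
def duration {V : Type} (W : List (TEdge V)) : ℕ :=
  ((W.getLast?.map fun e => e.time + e.trans).getD 0) - ((W.head?.map TEdge.time).getD 0)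

/-- Minimum duration of a temporal path from `u` to `w` (`⊤` if unreachable). -/
noncomputable def tdist {V : Type} (E : Set (TEdge V)) (u w : V) : ℕ∞ :=
  sInf {d : ℕ∞ | ∃ W, PathFrom E u W ∧ EndsAt W w ∧ (duration W : ℕ∞) = d}

lemma xi_eq_filter {m : ℕ} (E : Finset (TEdge (Fin m)))
    (hloop : ∀ e ∈ E, e.tail = e.head) (j : Fin m) :
    xi (E : Set (TEdge (Fin m))) j = ((E.filter fun e => e.tail = j) : Set (TEdge (Fin m))) := by
  ext e
  simp only [xi, Set.mem_setOf_eq, Finset.coe_filter, Set.mem_setOf_eq]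
  constructor
  · rintro ⟨W, ⟨-, hmem, hhd, hch⟩, heW⟩
    have key : ∀ (L : List (TEdge (Fin m))), (∀ e ∈ L, e ∈ E) →
        (∀ e, L.head? = some e → e.tail = j) →
        L.Chain' (fun e f => e.head = f.tail ∧ e.time + e.trans ≤ f.time) →
        ∀ e ∈ L, e.tail = j := by
      intro L
      induction L with
      | nil => intro _ _ _ e he; simp at he
      | cons a L ih =>
        intro hm hh hc e he
        have ha : a.tail = j := hh a rfl
        rcases List.mem_cons.mp he with rfl | he'
        · exact ha
        · refine ih (fun x hx => hm x (List.mem_cons_of_mem _ hx)) ?_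
            hc.tail e he'
          intro f hf
          cases L with
          | nil => simp at hf
          | cons b L' =>
            have := (List.isChain_cons_cons.mp hc).1
            simp only [List.head?_cons, Option.some.injEq] at hf
            subst hf
            rw [← this.1, ← hloop a (hm a List.mem_cons_self), ha]
    exact ⟨hmem e heW, key W hmem hhd hch e heW⟩
  · rintro ⟨heE, hte⟩
    refine ⟨[e], ⟨by simp, by simpa using heE, ?_, List.isChain_singleton _⟩, by simp⟩
    intro f hf; simp at hf; subst hf; exact hte

/-- Equivalence at the core of the NP-hardness reduction from UnaryBinPacking
(Theorem 4.1): the items `w₁,…,w_m` can be partitioned into `k` bins of total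
size at most `B` iff the temporal graph with `m` vertices where vertex `j` has
exactly `w j` self-loops, all edges having pairwise distinct availability times,
admits a Substream index with `k` substreams of size at most `B`. -/
theorem binpacking_iff_substream_index (m k B : ℕ) (hm : 0 < m) (hk : 0 < k)
    (w : Fin m → ℕ) (hw : ∀ j, 0 < w j)
    (E : Finset (TEdge (Fin m)))
    (hloop : ∀ e ∈ E, e.tail = e.head)
    (htimes : ∀ e ∈ E, ∀ e' ∈ E, e ≠ e' → e.time ≠ e'.time)
    (hwdeg : ∀ j : Fin m, (E.filter fun e => e.tail = j).card = w j) :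
    (∃ g : Fin m → Fin k,
        ∀ i : Fin k, ∑ j ∈ Finset.univ.filter fun j => g j = i, w j ≤ B) ↔
    (∃ (S : Fin k → Finset (TEdge (Fin m))) (f : Fin m → Fin k),
        (∀ i, S i ⊆ E ∧ (S i).card ≤ B) ∧
        ∀ j : Fin m, xi (E : Set (TEdge (Fin m))) j ⊆ (S (f j) : Set (TEdge (Fin m)))) := by
  constructor
  · rintro ⟨g, hg⟩
    refine ⟨fun i => E.filter fun e => g e.tail = i, g, fun i => ⟨Finset.filter_subset _ _, ?_⟩,
      fun j => ?_⟩
    · have hcard : (E.filter fun e => g e.tail = i).card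
          = ∑ j ∈ Finset.univ.filter fun j => g j = i,
              ((E.filter fun e => g e.tail = i).filter fun e => e.tail = j).card := by
        apply Finset.card_eq_sum_card_fiberwise
        intro e he
        simp only [Finset.mem_coe, Finset.coe_filter, Set.mem_setOf_eq, Finset.mem_filter] at he ⊢
        exact ⟨Finset.mem_univ _, he.2⟩
      rw [hcard]
      refine le_trans (le_of_eq (Finset.sum_congr rfl fun j hj => ?_)) (hg i)
      simp only [Finset.mem_filter] at hj
      rw [← hwdeg j]
      congr 1
      ext e
      simp only [Finset.mem_filter, and_assoc]
      constructor
      · rintro ⟨h1, h2, h3⟩; exact ⟨h1, h3⟩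
      · rintro ⟨h1, h3⟩; exact ⟨h1, by rw [h3, hj.2], h3⟩
    · rw [xi_eq_filter E hloop j]
      intro e he
      simp only [Finset.coe_filter, Set.mem_setOf_eq] at he ⊢
      exact ⟨he.1, by rw [he.2]⟩
  · rintro ⟨S, f, hS, hxi⟩
    refine ⟨f, fun i => ?_⟩
    have hsub : ∀ j, f j = i → (E.filter fun e => e.tail = j) ⊆ S i := by
      intro j hj
      have := hxi j
      rw [xi_eq_filter E hloop j, hj] at this
      exact fun e he => Finset.mem_coe.mp (this (Finset.mem_coe.mpr he))
    calc ∑ j ∈ Finset.univ.filter fun j => f j = i, w j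
        = ((Finset.univ.filter fun j => f j = i).biUnion
            fun j => E.filter fun e => e.tail = j).card := by
          rw [Finset.card_biUnion]
          · exact (Finset.sum_congr rfl fun j _ => (hwdeg j).symm)
          · intro a _ b _ hab
            rw [Function.onFun, Finset.disjoint_left]
            intro e hea heb
            simp only [Finset.mem_filter] at hea heb
            exact hab (hea.2.symm.trans heb.2)
      _ ≤ (S i).card := by
          apply Finset.card_le_card
          intro e he
          rcases Finset.mem_biUnion.mp he with ⟨j, hj, hej⟩
          exact hsub j (by simpa using hj) hej
      _ ≤ B := (hS i).2
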